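/- arXiv:1503.06970 — 4 statements merged into one kernel-verified Lean document; each statement's English description precedes it below -/
import Mathlib

section
/- In a plane graph where every inner face f satisfies (|f|−2)π ≥ θ(f) (the angle sum of the face), every inner vertex v satisfies θ(v) ≥ 2π (the angle sum around v), and the b outer-boundary vertices contribute at least (b−2)π in total, double counting of angles yields |V| − |E| + |F| ≤ 2; hence if the graph is planar connected (so Euler's formula gives equality), then θ(v) = 2π for every inner vertex. -/
/-- Double counting of angles in a plane graph: if every inner face `f` has angle sum
`θ(f) ≤ (|f|-2)π`, every inner vertex has angle sum `θ(v) ≥ 2π`, and the `b` outer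
vertices contribute at least `(b-2)π`, then `|V| - |E| + |F| ≤ 2`; if moreover Euler's
formula holds (equality), then `θ(v) = 2π` at every inner vertex. -/
theorem angle_double_counting
    {V F : Type*} [Fintype V] [Fintype F] [DecidableEq V] [DecidableEq F]
    (θ : V → F → ℝ) (hθnonneg : ∀ v f, 0 ≤ θ v f)
    (outerFace : F) (outerV : Finset V) (b : ℕ) (hb : outerV.card = b) (hb2 : 2 ≤ b)
    (size : F → ℕ) (nE : ℕ) (hbE : b ≤ 2 * nE)
    -- no angles are counted in the outer face
    (houterFace : ∀ v, θ v outerFace = 0)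
    -- angle sum around each inner vertex is at least 2π
    (hinnerV : ∀ v ∉ outerV, 2 * Real.pi ≤ ∑ f, θ v f)
    -- the outer vertices contribute at least (b-2)π in total
    (houterV : ((b : ℝ) - 2) * Real.pi ≤ ∑ v ∈ outerV, ∑ f, θ v f)
    -- angle sum of each inner face f is at most (|f|-2)π
    (hface : ∀ f, f ≠ outerFace → ∑ v, θ v f ≤ ((size f : ℝ) - 2) * Real.pi)
    -- each of the nE edges is incident to two faces; b of these incidences are
    -- with the outer face
    (hsize : ∑ f ∈ Finset.univ.filter (fun f => f ≠ outerFace), size f = 2 * nE - b) :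
    ((Fintype.card V : ℤ) - nE + Fintype.card F ≤ 2) ∧
    ((Fintype.card V : ℤ) - nE + Fintype.card F = 2 →
      ∀ v ∉ outerV, ∑ f, θ v f = 2 * Real.pi) := by
  classical
  have hπ : (0:ℝ) < Real.pi := Real.pi_pos
  set nV := Fintype.card V with hnV
  set nF := Fintype.card F with hnF
  set s : Finset F := Finset.univ.filter (fun f => f ≠ outerFace) with hs
  have hsE : s = Finset.univ.erase outerFace := Finset.filter_ne' _ _
  have hF1 : 1 ≤ nF := Fintype.card_pos_iff.mpr ⟨outerFace⟩
  have hbV : b ≤ nV := hb ▸ Finset.card_le_univ outerV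
  have hscard : (s.card : ℝ) = (nF:ℝ) - 1 := by
    rw [hsE, Finset.card_erase_of_mem (Finset.mem_univ _), Finset.card_univ,
      Nat.cast_sub hF1]
    simp
  have hIcard : (((outerVᶜ : Finset V)).card : ℝ) = (nV:ℝ) - b := by
    rw [Finset.card_compl, hb, Nat.cast_sub hbV]
  -- total angle sum, face side
  have h1 : ∑ v, ∑ f, θ v f = ∑ f ∈ s, ∑ v, θ v f := by
    rw [Finset.sum_comm, hsE, ← Finset.sum_erase_add _ _ (Finset.mem_univ outerFace)]
    simp [houterFace]
  have hsize' : ∑ f ∈ s, (size f : ℝ) = 2*(nE:ℝ) - b := by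
    rw [← Nat.cast_sum, hsize, Nat.cast_sub hbE]
    push_cast; ring
  have h2a : ∑ f ∈ s, ((size f:ℝ) - 2) = 2*(nE:ℝ) - b - 2*((nF:ℝ) - 1) := by
    rw [Finset.sum_sub_distrib, hsize', Finset.sum_const, nsmul_eq_mul, hscard]
    ring
  have h2 : ∑ f ∈ s, ∑ v, θ v f ≤ (2*(nE:ℝ) - b - 2*((nF:ℝ) - 1)) * Real.pi := by
    calc ∑ f ∈ s, ∑ v, θ v f ≤ ∑ f ∈ s, ((size f:ℝ) - 2) * Real.pi :=
          Finset.sum_le_sum (fun f hf => hface f (Finset.mem_filter.mp hf).2)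
      _ = (∑ f ∈ s, ((size f:ℝ) - 2)) * Real.pi := (Finset.sum_mul _ _ _).symm
      _ = _ := by rw [h2a]
  -- vertex side
  have h3 : ((outerVᶜ : Finset V).card : ℝ) * (2 * Real.pi)
      ≤ ∑ v ∈ outerVᶜ, ∑ f, θ v f := by
    have := Finset.card_nsmul_le_sum (outerVᶜ : Finset V) (fun v => ∑ f, θ v f)
      (2 * Real.pi) (fun v hv => hinnerV v (by simpa using hv))
    simpa [nsmul_eq_mul] using this
  have h4 : ∑ v ∈ outerV, (∑ f, θ v f) + ∑ v ∈ outerVᶜ, (∑ f, θ v f)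
      = ∑ v, ∑ f, θ v f := Finset.sum_add_sum_compl outerV _
  have key : ((nV:ℝ) - b) * (2 * Real.pi) + ((b:ℝ) - 2) * Real.pi
      ≤ (2*(nE:ℝ) - b - 2*((nF:ℝ) - 1)) * Real.pi := by
    rw [← hIcard]
    linarith [h1, h2, h3, h4]
  have key' : (2*(nV:ℝ) - b - 2) * Real.pi
      ≤ (2*(nE:ℝ) - b - 2*(nF:ℝ) + 2) * Real.pi := by nlinarith [key]
  have key2 : 2*(nV:ℝ) - b - 2 ≤ 2*(nE:ℝ) - b - 2*(nF:ℝ) + 2 :=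
    le_of_mul_le_mul_right key' hπ
  have hRle : (nV:ℝ) - nE + nF ≤ 2 := by linarith
  constructor
  · exact_mod_cast hRle
  · intro hE v hv
    have hER : (nV:ℝ) - nE + nF = 2 := by exact_mod_cast hE
    have heq : (2*(nE:ℝ) - b - 2*((nF:ℝ)-1)) * Real.pi - ((b:ℝ) - 2) * Real.pi
        = ((nV:ℝ) - b) * (2 * Real.pi) := by
      linear_combination (-2 * Real.pi) * hER
    have hub : ∑ v ∈ outerVᶜ, (∑ f, θ v f)
        ≤ ((outerVᶜ : Finset V).card : ℝ) * (2 * Real.pi) := by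
      rw [hIcard, ← heq]
      linarith [h1, h2, h4, houterV]
    have hsum_eq : ∑ v ∈ outerVᶜ, (2 * Real.pi) = ∑ v ∈ outerVᶜ, (∑ f, θ v f) := by
      rw [Finset.sum_const, nsmul_eq_mul]
      linarith [h3, hub]
    have hall := (Finset.sum_eq_sum_iff_of_le
      (fun i hi => hinnerV i (by simpa using hi))).mp hsum_eq
    exact ((hall v (by simpa using hv)).symm)
end

section
/- Let Σ be a finite contact system of straight line segments in the plane (any two segments meet in at most one point, which is an endpoint of at least one of them). Then every subset S ⊆ Σ with |S| ≥ 2 has at least three extremal points. -/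
open scoped Classical

abbrev Pt := ℝ × ℝ

/-- The set covered by a segment with endpoints `s.1`, `s.2`. -/
def segSet (s : Pt × Pt) : Set Pt := segment ℝ s.1 s.2

/-- A finite contact system of straight line segments: all segments are
non-degenerate and any two distinct segments meet in at most one point,
which is an endpoint of at least one of them. -/
def IsContactSystem (Sig : Finset (Pt × Pt)) : Prop :=
  (∀ s ∈ Sig, s.1 ≠ s.2) ∧
  ∀ s ∈ Sig, ∀ t ∈ Sig, s ≠ t →
    Set.Subsingleton (segSet s ∩ segSet t) ∧
    ∀ p ∈ segSet s ∩ segSet t,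
      p = s.1 ∨ p = s.2 ∨ p = t.1 ∨ p = t.2

/-- The unbounded region of the complement of a set `U`. -/
def unboundedRegion (U : Set Pt) : Set Pt :=
  {x | x ∉ U ∧ ¬ Bornology.IsBounded (connectedComponentIn Uᶜ x)}

/-- `p` is an extremal point for the set `S` of segments:
(E1) an endpoint of a segment of `S`, (E2) not interior to any segment of `S`,
(E3) incident to the unbounded region of `S`. -/
def ExtremalPoint (S : Finset (Pt × Pt)) (p : Pt) : Prop :=
  (∃ s ∈ S, p = s.1 ∨ p = s.2) ∧
  (∀ s ∈ S, p ∉ openSegment ℝ s.1 s.2) ∧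
  p ∈ closure (unboundedRegion (⋃ s ∈ S, segSet s))

open Set

/-- The complement of a convex set containing `U` is inside the unbounded region of `U`. -/
lemma aux_compl_subset_unbounded {U K : Set Pt} (hK : Convex ℝ K) {c : Pt} (hc : c ∈ K)
    (hUK : U ⊆ K) : Kᶜ ⊆ unboundedRegion U := by
  intro x hx
  have hxU : x ∉ U := fun h => hx (hUK h)
  refine ⟨hxU, ?_⟩
  set R : Set Pt := (fun t : ℝ => x + t • (x - c)) '' Set.Ici 0 with hR
  have hxc : x - c ≠ 0 := sub_ne_zero.mpr (fun h => hx (h ▸ hc))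
  have hRK : R ⊆ Kᶜ := by
    rintro _ ⟨t, ht, rfl⟩ hmem
    apply hx
    have ht0 : (0:ℝ) ≤ t := ht
    have h1 : (0:ℝ) < 1 + t := by linarith
    have heq : x = (t/(1+t)) • c + (1/(1+t)) • (x + t • (x - c)) := by
      have h1' : (1+t) ≠ 0 := ne_of_gt h1
      ext <;> simp [Prod.smul_def, smul_eq_mul] <;> field_simp <;> ring
    rw [heq]
    exact hK hc hmem (by positivity) (by positivity) (by field_simp; ring)
  have hxR : x ∈ R := ⟨0, Set.mem_Ici.mpr le_rfl, by simp⟩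
  have hRU : R ⊆ Uᶜ := hRK.trans (compl_subset_compl.mpr hUK)
  have hRconn : IsPreconnected R :=
    (isPreconnected_Ici).image _ (Continuous.continuousOn (by continuity))
  have hsub : R ⊆ connectedComponentIn Uᶜ x :=
    hRconn.subset_connectedComponentIn hxR hRU
  intro hb
  have hRb : Bornology.IsBounded R := hb.subset hsub
  obtain ⟨C, hC⟩ := (isBounded_iff_forall_norm_le (E := Pt) (s := R)).mp (by exact hRb)
  have hn : 0 < ‖x - c‖ := norm_pos_iff.mpr hxc
  have hCx : ‖x‖ ≤ C := hC x hxR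
  set t : ℝ := (C + ‖x‖ + 1) / ‖x - c‖ with hT
  have ht0 : 0 ≤ t := by
    have h0 : (0:ℝ) ≤ C + ‖x‖ + 1 := by have := norm_nonneg x; linarith
    exact div_nonneg h0 hn.le
  have hy : x + t • (x - c) ∈ R := ⟨t, ht0, rfl⟩
  have h2 : ‖t • (x - c)‖ ≤ ‖x + t • (x - c)‖ + ‖x‖ := by
    calc ‖t • (x - c)‖ = ‖(x + t • (x - c)) - x‖ := by rw [add_sub_cancel_left]
    _ ≤ ‖x + t • (x - c)‖ + ‖x‖ := norm_sub_le _ _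
  have h3 : ‖t • (x - c)‖ = C + ‖x‖ + 1 := by
    rw [norm_smul, Real.norm_of_nonneg ht0, hT]
    field_simp
  have h4 : ‖x + t • (x - c)‖ ≤ C := hC _ hy
  rw [h3] at h2
  linarith

lemma aux_collinear_convexHull {s : Set Pt} (h : Collinear ℝ s) :
    Collinear ℝ (convexHull ℝ s) := by
  rw [collinear_iff_exists_forall_eq_smul_vadd] at h ⊢
  obtain ⟨p₀, v, hv⟩ := h
  refine ⟨p₀, v, ?_⟩
  have hconv : Convex ℝ {p : Pt | ∃ r : ℝ, p = r • v +ᵥ p₀} := by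
    rintro p ⟨rp, rfl⟩ q ⟨rq, rfl⟩ a b ha hb hab
    refine ⟨a * rp + b * rq, ?_⟩
    obtain rfl : b = 1 - a := by linarith
    simp only [vadd_eq_add, smul_add, smul_smul, add_smul]
    module
  exact fun p hp => convexHull_min hv hconv hp

lemma aux_exists_pair {s : Set Pt} (hs : s.Finite) (h : s.ncard ≤ 2) :
    ∃ a b : Pt, s ⊆ {a, b} := by
  obtain h0 | h1 | h2 : s.ncard = 0 ∨ s.ncard = 1 ∨ s.ncard = 2 := by omega
  · rw [Set.ncard_eq_zero hs] at h0
    exact ⟨0, 0, by simp [h0]⟩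
  · obtain ⟨a, rfl⟩ := Set.ncard_eq_one.mp h1
    exact ⟨a, a, by simp⟩
  · obtain ⟨a, b, _, rfl⟩ := Set.ncard_eq_two.mp h2
    exact ⟨a, b, subset_rfl⟩

lemma aux_extreme_not_interior {K : Set Pt} {p : Pt} (hp : p ∈ K.extremePoints ℝ) :
    p ∉ interior K := by
  intro h
  obtain ⟨ε, hε, hball⟩ := Metric.mem_nhds_iff.mp (mem_interior_iff_mem_nhds.mp h)
  set w : Pt := (ε/2, 0) with hw
  have hwn : ‖w‖ = ε/2 := by
    simp only [hw, Prod.norm_def, norm_zero]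
    rw [Real.norm_eq_abs, abs_of_pos (half_pos hε), max_eq_left (by positivity)]
  have h1 : p - w ∈ K := by
    apply hball
    rw [Metric.mem_ball, dist_eq_norm, show p - w - p = -w by abel, norm_neg, hwn]
    linarith
  have h2 : p + w ∈ K := by
    apply hball
    rw [Metric.mem_ball, dist_eq_norm, show p + w - p = w by abel, hwn]
    linarith
  have h3 : p ∈ openSegment ℝ (p - w) (p + w) := by
    refine ⟨1/2, 1/2, by norm_num, by norm_num, by norm_num, ?_⟩
    module
  have := ((mem_extremePoints.mp hp).2 _ h1 _ h2 h3).2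
  have hw0 : w ≠ 0 := by
    simp [hw, Prod.ext_iff]
    positivity
  apply hw0
  have h5 : p + w = p := this
  linear_combination (norm := module) h5

/-- Every subset `S` with `|S| ≥ 2` of a finite contact system of straight line
segments has at least three extremal points. -/
theorem contact_system_three_extremal_points
    (Sig : Finset (Pt × Pt)) (hSig : IsContactSystem Sig)
    (S : Finset (Pt × Pt)) (hS : S ⊆ Sig) (hcard : 2 ≤ S.card) :
    3 ≤ {p | ExtremalPoint S p}.ncard := by
  classical
  obtain ⟨hnd, hmeet⟩ := hSig
  set V : Set Pt := {p | ∃ s ∈ S, p = s.1 ∨ p = s.2} with hVdef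
  have hVfin : V.Finite := by
    have h : V ⊆ ↑(S.image Prod.fst ∪ S.image Prod.snd) := by
      rintro p ⟨s, hs, h | h⟩ <;>
        simp only [Finset.coe_union, Finset.coe_image, Set.mem_union, Set.mem_image]
      · exact Or.inl ⟨s, hs, h.symm⟩
      · exact Or.inr ⟨s, hs, h.symm⟩
    exact Set.Finite.subset (Finset.finite_toSet _) h
  set K : Set Pt := convexHull ℝ V with hKdef
  have hVK : V ⊆ K := subset_convexHull ℝ V
  have hKconv : Convex ℝ K := convex_convexHull ℝ V
  have hUK : (⋃ s ∈ S, segSet s) ⊆ K := by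
    intro p hp
    simp only [Set.mem_iUnion] at hp
    obtain ⟨s, hs, hm⟩ := hp
    exact hKconv.segment_subset (hVK ⟨s, hs, Or.inl rfl⟩) (hVK ⟨s, hs, Or.inr rfl⟩) hm
  obtain ⟨s₀, hs₀, t₀, ht₀, hst₀⟩ := Finset.one_lt_card.mp (by omega : 1 < S.card)
  have hmem1 : ∀ s ∈ S, s.1 ∈ V := fun s hs => ⟨s, hs, Or.inl rfl⟩
  have hmem2 : ∀ s ∈ S, s.2 ∈ V := fun s hs => ⟨s, hs, Or.inr rfl⟩
  have hE3 : ∀ p : Pt, p ∉ interior K →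
      p ∈ closure (unboundedRegion (⋃ s ∈ S, segSet s)) := by
    intro p hp
    have h1 : Kᶜ ⊆ unboundedRegion (⋃ s ∈ S, segSet s) :=
      aux_compl_subset_unbounded hKconv (hVK (hmem1 s₀ hs₀)) hUK
    have h2 : p ∈ closure Kᶜ := by rw [closure_compl]; exact hp
    exact closure_mono h1 h2
  set E : Set Pt := {p | ExtremalPoint S p} with hEdef
  have hEV : E ⊆ V := fun p hp => by obtain ⟨s, hs, h⟩ := hp.1; exact ⟨s, hs, h⟩
  have hEfin : E.Finite := hVfin.subset hEV
  by_cases hcol : Collinear ℝ V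
  · -- collinear case
    obtain ⟨v, hv⟩ := (collinear_iff_of_mem (hmem1 s₀ hs₀)).mp hcol
    set p₀ : Pt := s₀.1 with hp₀
    have hvne : v ≠ 0 := by
      rintro rfl
      obtain ⟨r2, h2⟩ := hv s₀.2 (hmem2 s₀ hs₀)
      simp only [smul_zero, zero_vadd, vadd_eq_add, zero_add] at h2
      exact hnd s₀ (hS hs₀) h2.symm
    set f : ℝ → Pt := fun r => r • v +ᵥ p₀ with hf
    have hfinj : Function.Injective f := by
      intro r r' h
      have h2 : r • v = r' • v := by
        simpa only [hf, vadd_eq_add, add_left_inj] using h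
      exact smul_left_injective ℝ hvne h2
    set F : ℝ →ᵃ[ℝ] Pt := AffineMap.lineMap p₀ (v +ᵥ p₀) with hF
    have hFf : ∀ r, F r = f r := by
      intro r
      simp [hF, hf, AffineMap.lineMap_apply, vadd_vsub]
    have hseg : ∀ a b : ℝ, f '' Set.uIcc a b = segment ℝ (f a) (f b) := by
      intro a b
      rw [← segment_eq_uIcc, ← Set.image_congr (fun x _ => (hFf x)),
        image_segment, hFf, hFf]
    have hopen : ∀ a b : ℝ, f '' openSegment ℝ a b = openSegment ℝ (f a) (f b) := by
      intro a b
      rw [← Set.image_congr (fun x _ => (hFf x)), image_openSegment, hFf, hFf]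
    have hcoord : ∀ s ∈ S, ∃ a b : ℝ, a ≠ b ∧ s.1 = f a ∧ s.2 = f b := by
      intro s hs
      obtain ⟨a, ha⟩ := hv s.1 (hmem1 s hs)
      obtain ⟨b, hb⟩ := hv s.2 (hmem2 s hs)
      refine ⟨a, b, ?_, ha, hb⟩
      rintro rfl
      exact hnd s (hS hs) (ha.trans hb.symm)
    have hsegSet : ∀ s ∈ S, ∀ a b : ℝ, s.1 = f a → s.2 = f b →
        segSet s = f '' Set.uIcc a b := by
      intro s hs a b h1 h2
      rw [segSet, h1, h2, ← hseg]
    have hss : ∀ s ∈ S, ∀ t ∈ S, s ≠ t → ∀ a b c d : ℝ,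
        s.1 = f a → s.2 = f b → t.1 = f c → t.2 = f d →
        Set.Subsingleton (Set.uIcc a b ∩ Set.uIcc c d) := by
      intro s hs t ht hst a b c d h1 h2 h3 h4 x hx y hy
      have hsub := (hmeet s (hS hs) t (hS ht) hst).1
      have hxm : f x ∈ segSet s ∩ segSet t :=
        ⟨by rw [hsegSet s hs a b h1 h2]; exact ⟨x, hx.1, rfl⟩,
         by rw [hsegSet t ht c d h3 h4]; exact ⟨x, hx.2, rfl⟩⟩
      have hym : f y ∈ segSet s ∩ segSet t :=
        ⟨by rw [hsegSet s hs a b h1 h2]; exact ⟨y, hy.1, rfl⟩,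
         by rw [hsegSet t ht c d h3 h4]; exact ⟨y, hy.2, rfl⟩⟩
      exact hfinj (hsub hxm hym)
    have hline : K ⊆ Set.range f := by
      apply convexHull_min
      · intro p hp
        obtain ⟨r, hr⟩ := hv p hp
        exact ⟨r, hr.symm⟩
      · rintro p ⟨rp, rfl⟩ q ⟨rq, rfl⟩ α β hα hβ hαβ
        refine ⟨α * rp + β * rq, ?_⟩
        obtain rfl : β = 1 - α := by linarith
        simp only [hf, vadd_eq_add, smul_add, smul_smul, add_smul]
        module
    have hint : interior K = ∅ := by
      by_contra hne
      obtain ⟨q, hq⟩ := Set.nonempty_iff_ne_empty.mpr hne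
      obtain ⟨ε, hε, hball⟩ := Metric.mem_nhds_iff.mp (mem_interior_iff_mem_nhds.mp hq)
      set w : Pt := (-v.2, v.1) with hw
      have hwne : w ≠ 0 := by
        intro h
        apply hvne
        have h1 : -v.2 = (0:ℝ) := congrArg Prod.fst h
        have h2 : v.1 = (0:ℝ) := congrArg Prod.snd h
        have h3 : v.2 = (0:ℝ) := by linarith
        show v = ((0:ℝ), (0:ℝ))
        exact Prod.ext h2 h3
      have hwpos : 0 < ‖w‖ := norm_pos_iff.mpr hwne
      set δ : ℝ := ε / (2 * ‖w‖) with hδ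
      have hδpos : 0 < δ := by positivity
      have hmem : q + δ • w ∈ K := by
        apply hball
        have h0 : ‖w‖ ≠ 0 := ne_of_gt hwpos
        have hnrm : ‖δ • w‖ = ε / 2 := by
          rw [norm_smul, Real.norm_of_nonneg hδpos.le, hδ]
          field_simp
        rw [Metric.mem_ball, dist_eq_norm, show q + δ • w - q = δ • w by abel, hnrm]
        linarith
      obtain ⟨r, hr⟩ := hline (interior_subset hq)
      obtain ⟨r', hr'⟩ := hline hmem
      have hkey : δ • w = (r' - r) • v := by
        have e1 : r' • v + p₀ = q + δ • w := by rw [← hr']; simp [hf, vadd_eq_add]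
        have e2 : r • v + p₀ = q := by rw [← hr]; simp [hf, vadd_eq_add]
        calc δ • w = q + δ • w - q := by abel
          _ = (r' • v + p₀) - (r • v + p₀) := by rw [e1, e2]
          _ = (r' - r) • v := by rw [sub_smul]; abel
      have h1 : δ * (-v.2) = (r' - r) * v.1 := by
        have := congrArg Prod.fst hkey
        simpa [hw, Prod.smul_def, smul_eq_mul] using this
      have h2 : δ * v.1 = (r' - r) * v.2 := by
        have := congrArg Prod.snd hkey
        simpa [hw, Prod.smul_def, smul_eq_mul] using this
      have hv2 : 0 < v.1 ^ 2 + v.2 ^ 2 := by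
        have hne : v.1 ≠ 0 ∨ v.2 ≠ 0 := by
          by_contra hc
          push_neg at hc
          exact hvne (Prod.ext hc.1 hc.2)
        rcases hne with h | h
        · have h4 := pow_two_pos_of_ne_zero h
          linarith [sq_nonneg v.2]
        · have h4 := pow_two_pos_of_ne_zero h
          linarith [sq_nonneg v.1]
      have h5 : δ * (v.1 ^ 2 + v.2 ^ 2) = 0 := by
        linear_combination v.1 * h2 - v.2 * h1
      have h6 := mul_pos hδpos hv2
      linarith
    have hE2 : ∀ s ∈ S, ∀ r : ℝ, (s.1 = f r ∨ s.2 = f r) →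
        ∀ t ∈ S, f r ∉ openSegment ℝ t.1 t.2 := by
      intro s hs r hr t ht hmem
      by_cases hts : t = s
      · subst hts
        rcases hr with h | h
        · rw [← h] at hmem
          exact hnd t (hS ht) (left_mem_openSegment_iff.mp hmem)
        · rw [← h] at hmem
          exact hnd t (hS ht) (right_mem_openSegment_iff.mp hmem)
      · obtain ⟨a, b, hab, ha, hb⟩ := hcoord s hs
        obtain ⟨c, d, hcd, hc, hd⟩ := hcoord t ht
        rw [hc, hd, ← hopen c d] at hmem
        obtain ⟨ρ, hρ, hfρ⟩ := hmem
        obtain rfl : ρ = r := hfinj hfρ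
        rw [openSegment_eq_Ioo' hcd] at hρ
        have hT : Set.Subsingleton (Set.uIcc a b ∩ Set.uIcc c d) :=
          hss s hs t ht (fun h => hts h.symm) a b c d ha hb hc hd
        have hrab : ρ = a ∨ ρ = b := by
          rcases hr with h | h
          · exact Or.inl (hfinj (ha.symm.trans h)).symm
          · exact Or.inr (hfinj (hb.symm.trans h)).symm
        obtain ⟨o, ho1, ho2⟩ : ∃ o : ℝ, ρ ≠ o ∧ Set.uIcc a b = Set.uIcc ρ o := by
          rcases hrab with rfl | rfl
          · exact ⟨b, hab, rfl⟩
          · exact ⟨a, fun h => hab h.symm, Set.uIcc_comm a ρ⟩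
        rw [ho2] at hT
        have huIcc : Set.uIcc c d = Set.Icc (min c d) (max c d) := by
          rfl
        have hmn : min c d < ρ := hρ.1
        have hmx : ρ < max c d := hρ.2
        have hρcd : ρ ∈ Set.uIcc c d := by
          rw [huIcc]; exact ⟨hmn.le, hmx.le⟩
        rcases lt_or_gt_of_ne ho1 with hro | hro
        · have h1 : ρ < min o ((ρ + max c d) / 2) := lt_min hro (by linarith)
          have h2 : min o ((ρ + max c d) / 2) ∈ Set.uIcc ρ o := by
            rw [Set.uIcc_of_le hro.le]
            exact ⟨h1.le, min_le_left _ _⟩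
          have h3 : min o ((ρ + max c d) / 2) ∈ Set.uIcc c d := by
            rw [huIcc]
            constructor
            · linarith
            · calc min o ((ρ + max c d) / 2) ≤ (ρ + max c d) / 2 := min_le_right _ _
                _ ≤ max c d := by linarith
          exact absurd (hT ⟨Set.left_mem_uIcc, hρcd⟩ ⟨h2, h3⟩) (ne_of_lt h1)
        · have h1 : max o ((ρ + min c d) / 2) < ρ := max_lt hro (by linarith)
          have h2 : max o ((ρ + min c d) / 2) ∈ Set.uIcc ρ o := by
            rw [Set.uIcc_of_ge hro.le]
            exact ⟨le_max_left _ _, h1.le⟩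
          have h3 : max o ((ρ + min c d) / 2) ∈ Set.uIcc c d := by
            rw [huIcc]
            constructor
            · calc min c d ≤ (ρ + min c d) / 2 := by linarith
                _ ≤ max o ((ρ + min c d) / 2) := le_max_right _ _
            · linarith
          exact absurd (hT ⟨Set.left_mem_uIcc, hρcd⟩ ⟨h2, h3⟩) h1.ne'
    have hextend : ∀ s ∈ S, ∀ r : ℝ, (s.1 = f r ∨ s.2 = f r) → f r ∈ E := by
      intro s hs r hr
      refine ⟨⟨s, hs, ?_⟩, hE2 s hs r hr, hE3 _ (by rw [hint]; exact Set.notMem_empty _)⟩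
      rcases hr with h | h
      · exact Or.inl h.symm
      · exact Or.inr h.symm
    obtain ⟨a, b, hab, ha, hb⟩ := hcoord s₀ hs₀
    obtain ⟨c, d, hcd, hc, hd⟩ := hcoord t₀ ht₀
    have hSS : Set.Subsingleton (Set.uIcc a b ∩ Set.uIcc c d) :=
      hss s₀ hs₀ t₀ ht₀ hst₀ a b c d ha hb hc hd
    obtain ⟨e, he, hea, heb⟩ : ∃ e, (e = c ∨ e = d) ∧ e ≠ a ∧ e ≠ b := by
      by_contra hcon
      push_neg at hcon
      have hc' : c = a ∨ c = b := by
        by_contra h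
        push_neg at h
        exact h.2 (hcon c (Or.inl rfl) h.1)
      have hd' : d = a ∨ d = b := by
        by_contra h
        push_neg at h
        exact h.2 (hcon d (Or.inr rfl) h.1)
      have heq : Set.uIcc c d = Set.uIcc a b := by
        rcases hc' with rfl | rfl <;> rcases hd' with rfl | rfl
        · exact absurd rfl hcd
        · rfl
        · exact Set.uIcc_comm _ _
        · exact absurd rfl hcd
      rw [heq, Set.inter_self] at hSS
      exact hab (hSS Set.left_mem_uIcc Set.right_mem_uIcc)
    have h1 : f a ∈ E := hextend s₀ hs₀ a (Or.inl ha)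
    have h2 : f b ∈ E := hextend s₀ hs₀ b (Or.inr hb)
    have h3 : f e ∈ E := by
      rcases he with rfl | rfl
      · exact hextend t₀ ht₀ _ (Or.inl hc)
      · exact hextend t₀ ht₀ _ (Or.inr hd)
    have hsub : ({f a, f b, f e} : Set Pt) ⊆ E := by
      rintro p (rfl | rfl | rfl) <;> assumption
    have hcard3 : ({f a, f b, f e} : Set Pt).ncard = 3 := by
      rw [Set.ncard_eq_three]
      exact ⟨f a, f b, f e, fun h => hab (hfinj h), fun h => hea (hfinj h).symm,
        fun h => heb (hfinj h).symm, rfl⟩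
    calc (3:ℕ) = ({f a, f b, f e} : Set Pt).ncard := hcard3.symm
      _ ≤ E.ncard := Set.ncard_le_ncard hsub hEfin
  · -- non-collinear case
    set EP : Set Pt := K.extremePoints ℝ with hEP
    have hEPV : EP ⊆ V := extremePoints_convexHull_subset
    have hEPE : EP ⊆ E := by
      intro p hp
      refine ⟨hEPV hp, ?_, hE3 p (aux_extreme_not_interior hp)⟩
      intro s hs hmem
      have h := (mem_extremePoints.mp hp).2 _ (hVK (hmem1 s hs)) _ (hVK (hmem2 s hs)) hmem
      exact hnd s (hS hs) (h.1.trans h.2.symm)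
    have h3 : 3 ≤ EP.ncard := by
      by_contra hlt
      push_neg at hlt
      obtain ⟨a, b, hab⟩ := aux_exists_pair (hVfin.subset hEPV) (by omega)
      apply hcol
      have hKM : K = convexHull ℝ EP := by
        have hKcomp : IsCompact K := hVfin.isCompact_convexHull ℝ
        have h := closure_convexHull_extremePoints hKcomp hKconv
        rwa [IsClosed.closure_eq (((hVfin.subset hEPV).isCompact_convexHull ℝ).isClosed),
          eq_comm] at h
      have hsub : V ⊆ convexHull ℝ ({a, b} : Set Pt) := by
        refine hVK.trans ?_
        rw [hKM]
        exact convexHull_mono hab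
      exact Collinear.subset hsub (aux_collinear_convexHull (collinear_pair ℝ a b))
    calc (3:ℕ) ≤ EP.ncard := h3
      _ ≤ E.ncard := Set.ncard_le_ncard hEPE hEfin
end

section
/- Let S be a finite set of at least two line segments all contained in a common line ℓ, forming a contact system (any two meet in at most one point, an endpoint of one of them), whose union is connected. Then there exists a point of ℓ that is an endpoint of at least two segments of S and is not an interior point of any segment of S. -/
/-- 1D key lemma: if two nondegenerate closed intervals meet in a subsingleton,
then any common point is an endpoint of the first. -/
lemma aux_endpoint {a b c d p : ℝ} (hab : a ≠ b) (hcd : c ≠ d)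
    (hsub : (Set.uIcc a b ∩ Set.uIcc c d).Subsingleton)
    (hp : p ∈ Set.uIcc a b ∩ Set.uIcc c d) : p = a ∨ p = b := by
  obtain ⟨hp1, hp2⟩ := hp
  rw [Set.uIcc, Set.mem_Icc] at hp1 hp2
  have hmp : (a ⊓ b) ⊔ (c ⊓ d) ≤ p := sup_le hp1.1 hp2.1
  have hpM : p ≤ (a ⊔ b) ⊓ (c ⊔ d) := le_inf hp1.2 hp2.2
  have mem1 : (a ⊓ b) ⊔ (c ⊓ d) ∈ Set.uIcc a b ∩ Set.uIcc c d := by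
    rw [Set.mem_inter_iff, Set.uIcc, Set.uIcc, Set.mem_Icc, Set.mem_Icc]
    exact ⟨⟨le_sup_left, le_trans (hmp.trans hpM) inf_le_left⟩,
           ⟨le_sup_right, le_trans (hmp.trans hpM) inf_le_right⟩⟩
  have mem2 : (a ⊔ b) ⊓ (c ⊔ d) ∈ Set.uIcc a b ∩ Set.uIcc c d := by
    rw [Set.mem_inter_iff, Set.uIcc, Set.uIcc, Set.mem_Icc, Set.mem_Icc]
    exact ⟨⟨le_trans le_sup_left (hmp.trans hpM), inf_le_left⟩,
           ⟨le_trans le_sup_right (hmp.trans hpM), inf_le_right⟩⟩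
  have hmM : (a ⊓ b) ⊔ (c ⊓ d) = (a ⊔ b) ⊓ (c ⊔ d) := hsub mem1 mem2
  have hpm : p = (a ⊓ b) ⊔ (c ⊓ d) := le_antisymm (hpM.trans hmM.ge) hmp
  have h1 : a ⊓ b < a ⊔ b := inf_lt_sup.mpr hab
  have h2 : c ⊓ d < c ⊔ d := inf_lt_sup.mpr hcd
  rcases min_cases a b with ⟨e1, _⟩ | ⟨e1, _⟩ <;> rcases max_cases a b with ⟨e2, _⟩ | ⟨e2, _⟩ <;>
    rcases min_cases c d with ⟨e3, _⟩ | ⟨e3, _⟩ <;>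
    rcases max_cases c d with ⟨e4, _⟩ | ⟨e4, _⟩ <;>
    rcases max_cases (min a b) (min c d) with ⟨e5, _⟩ | ⟨e5, _⟩ <;>
    rcases min_cases (max a b) (max c d) with ⟨e6, _⟩ | ⟨e6, _⟩ <;>
    first
      | (left; linarith)
      | (right; linarith)

/-- Collinear case: a finite contact system of at least two segments, all lying on a
common line, with connected union, has a point that is an endpoint of at least two
segments and interior to none. -/
theorem collinear_contact_system_common_endpoint
    (S : Finset (Pt × Pt)) (hcard : 2 ≤ S.card)
    (hnd : ∀ s ∈ S, s.1 ≠ s.2)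
    -- all segments lie on a common line ℓ
    (hline : Collinear ℝ (⋃ s ∈ S, segSet s))
    -- contact system: two distinct segments meet in at most one point, an endpoint
    (hcontact : ∀ s ∈ S, ∀ t ∈ S, s ≠ t →
      Set.Subsingleton (segSet s ∩ segSet t) ∧
      ∀ p ∈ segSet s ∩ segSet t, p = s.1 ∨ p = s.2 ∨ p = t.1 ∨ p = t.2)
    -- the union of the segments is connected
    (hconn : IsConnected (⋃ s ∈ S, segSet s)) :
    ∃ p : Pt,
      (∃ s ∈ S, ∃ t ∈ S, s ≠ t ∧ (p = s.1 ∨ p = s.2) ∧ (p = t.1 ∨ p = t.2)) ∧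
      ∀ s ∈ S, p ∉ openSegment ℝ s.1 s.2 := by
  classical
  set C : Set Pt := ⋃ s ∈ S, segSet s with hC
  have hsubC : ∀ s ∈ S, segSet s ⊆ C := by
    intro s hs
    exact Set.subset_biUnion_of_mem hs
  -- segments are compact, hence closed
  have hcomp : ∀ s : Pt × Pt, IsCompact (segSet s) := by
    intro s
    rw [segSet, segment_eq_image]
    exact (isCompact_Icc).image (by fun_prop)
  -- Step 1: find two distinct intersecting segments
  have hSpos : 0 < S.card := by omega
  obtain ⟨s₀, hs₀⟩ := Finset.card_pos.mp hSpos
  have hSne : (S.erase s₀).Nonempty := by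
    rw [← Finset.card_pos, Finset.card_erase_of_mem hs₀]; omega
  obtain ⟨t₀, ht₀'⟩ := hSne
  have ht₀ : t₀ ∈ S := Finset.mem_of_mem_erase ht₀'
  set B : Set Pt := ⋃ t ∈ S.erase s₀, segSet t with hB
  have hCclosed : IsClosed C := by
    apply Set.Finite.isClosed_biUnion S.finite_toSet
    intro s _; exact (hcomp s).isClosed
  have hBclosed : IsClosed B := by
    apply Set.Finite.isClosed_biUnion (S.erase s₀).finite_toSet
    intro s _; exact (hcomp s).isClosed
  have hcover : C ⊆ segSet s₀ ∪ B := by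
    intro x hx
    simp only [hC, Set.mem_iUnion] at hx
    obtain ⟨s, hs, hxs⟩ := hx
    by_cases h : s = s₀
    · left; exact h ▸ hxs
    · right; exact Set.mem_biUnion (Finset.mem_erase.mpr ⟨h, hs⟩) hxs
  obtain ⟨s, hsS, t, htS, hst, p, hpS, hpT⟩ :
      ∃ s ∈ S, ∃ t ∈ S, s ≠ t ∧ ∃ p, p ∈ segSet s ∧ p ∈ segSet t := by
    by_cases hdisj : Disjoint (segSet s₀) B
    · exfalso
      rcases (isPreconnected_iff_subset_of_fully_disjoint_closed hCclosed).mp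
          hconn.isPreconnected (segSet s₀) B (hcomp s₀).isClosed hBclosed hcover hdisj with
        h | h
      · have : segSet t₀ ⊆ segSet s₀ := (hsubC t₀ ht₀).trans h
        have ht0in : t₀.1 ∈ B := Set.mem_biUnion ht₀' (left_mem_segment ℝ _ _)
        exact hdisj.ne_of_mem (this (left_mem_segment ℝ _ _)) ht0in rfl
      · have hs0in : s₀.1 ∈ segSet s₀ := left_mem_segment ℝ _ _
        have : s₀.1 ∈ B := h (hsubC s₀ hs₀ hs0in)
        exact hdisj.ne_of_mem hs0in this rfl
    · rw [Set.not_disjoint_iff] at hdisj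
      obtain ⟨p, hp1, hp2⟩ := hdisj
      simp only [hB, Set.mem_iUnion] at hp2
      obtain ⟨t, ht', hpt⟩ := hp2
      exact ⟨s₀, hs₀, t, Finset.mem_of_mem_erase ht',
        fun h => (Finset.mem_erase.mp ht').1 h.symm, p, hp1, hpt⟩
  -- Step 2: parametrize the line
  obtain ⟨p₀, v, hv⟩ := (collinear_iff_exists_forall_eq_smul_vadd C).mp hline
  have hvne : v ≠ 0 := by
    rintro rfl
    have h1 := hv s.1 (hsubC s hsS (left_mem_segment ℝ _ _))
    have h2 := hv s.2 (hsubC s hsS (right_mem_segment ℝ _ _))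
    obtain ⟨c1, hc1⟩ := h1; obtain ⟨c2, hc2⟩ := h2
    simp only [smul_zero, zero_vadd] at hc1 hc2
    exact hnd s hsS (hc1.trans hc2.symm)
  set φ : Pt → ℝ := fun x => x.1 * v.1 + x.2 * v.2 with hφ
  have hvv : v.1 * v.1 + v.2 * v.2 ≠ 0 := by
    intro h
    apply hvne
    have h1 : v.1 = 0 ∧ v.2 = 0 := by constructor <;> nlinarith [sq_nonneg v.1, sq_nonneg v.2]
    exact Prod.ext h1.1 h1.2
  -- φ is injective on C
  have hinj : ∀ x ∈ C, ∀ y ∈ C, φ x = φ y → x = y := by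
    intro x hx y hy hxy
    obtain ⟨cx, hcx⟩ := hv x hx
    obtain ⟨cy, hcy⟩ := hv y hy
    subst hcx; subst hcy
    have : cx = cy := by
      simp only [hφ, vadd_eq_add, Prod.fst_add, Prod.snd_add, Prod.smul_fst, Prod.smul_snd,
        smul_eq_mul] at hxy
      have : cx * (v.1 * v.1 + v.2 * v.2) = cy * (v.1 * v.1 + v.2 * v.2) := by ring_nf; nlinarith [hxy]
      exact mul_right_cancel₀ hvv this
    rw [this]
  -- φ respects convex combinations
  have hlin : ∀ (a b : ℝ) (x y : Pt), φ (a • x + b • y) = a * φ x + b * φ y := by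
    intro a b x y
    simp only [hφ, Prod.fst_add, Prod.snd_add, Prod.smul_fst, Prod.smul_snd, smul_eq_mul]
    ring
  -- image of a segment
  have himg : ∀ u : Pt × Pt, φ '' segSet u = segment ℝ (φ u.1) (φ u.2) := by
    intro u
    ext r
    constructor
    · rintro ⟨q, hq, rfl⟩
      obtain ⟨a, b, ha, hb, hab, rfl⟩ := hq
      exact ⟨a, b, ha, hb, hab, (hlin a b u.1 u.2).symm⟩
    · rintro ⟨a, b, ha, hb, hab, rfl⟩
      exact ⟨a • u.1 + b • u.2, ⟨a, b, ha, hb, hab, rfl⟩, hlin a b u.1 u.2⟩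
  -- transfer subsingleton to ℝ
  have htrans : ∀ u ∈ S, ∀ w ∈ S, (segSet u ∩ segSet w).Subsingleton →
      (Set.uIcc (φ u.1) (φ u.2) ∩ Set.uIcc (φ w.1) (φ w.2)).Subsingleton := by
    intro u hu w hw hsub x hx y hy
    rw [← segment_eq_uIcc, ← segment_eq_uIcc, ← himg u, ← himg w] at hx hy
    obtain ⟨⟨q1, hq1, rfl⟩, ⟨q2, hq2, hq12⟩⟩ := hx
    obtain ⟨⟨q3, hq3, rfl⟩, ⟨q4, hq4, hq34⟩⟩ := hy
    have e1 : q2 = q1 := hinj q2 (hsubC w hw hq2) q1 (hsubC u hu hq1) hq12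
    have e2 : q4 = q3 := hinj q4 (hsubC w hw hq4) q3 (hsubC u hu hq3) hq34
    have : q1 = q3 := hsub ⟨hq1, e1 ▸ hq2⟩ ⟨hq3, e2 ▸ hq4⟩
    rw [this]
  -- endpoint distinctness under φ
  have hφne : ∀ u ∈ S, φ u.1 ≠ φ u.2 := by
    intro u hu h
    exact hnd u hu (hinj u.1 (hsubC u hu (left_mem_segment ℝ _ _))
      u.2 (hsubC u hu (right_mem_segment ℝ _ _)) h)
  -- φ p in both intervals
  have hφp : ∀ u ∈ S, p ∈ segSet u → φ p ∈ Set.uIcc (φ u.1) (φ u.2) := by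
    intro u hu hpu
    rw [← segment_eq_uIcc, ← himg u]
    exact ⟨p, hpu, rfl⟩
  have hsubst := (hcontact s hsS t htS hst).1
  have hsubR := htrans s hsS t htS hsubst
  have hpin : φ p ∈ Set.uIcc (φ s.1) (φ s.2) ∩ Set.uIcc (φ t.1) (φ t.2) :=
    ⟨hφp s hsS hpS, hφp t htS hpT⟩
  have hps : φ p = φ s.1 ∨ φ p = φ s.2 :=
    aux_endpoint (hφne s hsS) (hφne t htS) hsubR hpin
  have hpt : φ p = φ t.1 ∨ φ p = φ t.2 := by
    have hpin' : φ p ∈ Set.uIcc (φ t.1) (φ t.2) ∩ Set.uIcc (φ s.1) (φ s.2) :=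
      ⟨hpin.2, hpin.1⟩
    exact aux_endpoint (hφne t htS) (hφne s hsS)
      (by rw [Set.inter_comm] at hsubR; exact hsubR) hpin'
  have hpC : p ∈ C := hsubC s hsS hpS
  have hlift : ∀ u ∈ S, p ∈ segSet u → (φ p = φ u.1 ∨ φ p = φ u.2) → p = u.1 ∨ p = u.2 := by
    intro u hu hpu h
    rcases h with h | h
    · left; exact hinj p hpC u.1 (hsubC u hu (left_mem_segment ℝ _ _)) h
    · right; exact hinj p hpC u.2 (hsubC u hu (right_mem_segment ℝ _ _)) h
  refine ⟨p, ⟨s, hsS, t, htS, hst, hlift s hsS hpS hps, hlift t htS hpT hpt⟩, ?_⟩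
  -- p is interior to no segment
  intro u hu hpo
  have hpu : p ∈ segSet u := openSegment_subset_segment ℝ u.1 u.2 hpo
  -- φ p is strictly between φ u.1 and φ u.2
  have hφpo : φ p ∈ Set.Ioo (min (φ u.1) (φ u.2)) (max (φ u.1) (φ u.2)) := by
    obtain ⟨a, b, ha, hb, hab, hsum⟩ := hpo
    have : φ p = a * φ u.1 + b * φ u.2 := by rw [← hsum]; exact hlin a b u.1 u.2
    rw [← openSegment_eq_Ioo' (hφne u hu)]
    exact ⟨a, b, ha, hb, hab, this.symm⟩
  have hφpne1 : φ p ≠ φ u.1 ∧ φ p ≠ φ u.2 := by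
    constructor <;> intro h <;> rw [h] at hφpo <;>
      rcases min_cases (φ u.1) (φ u.2) with ⟨h1, _⟩ | ⟨h1, _⟩ <;>
      rcases max_cases (φ u.1) (φ u.2) with ⟨h2, _⟩ | ⟨h2, _⟩ <;>
      obtain ⟨hl, hr⟩ := hφpo <;> rw [h1] at hl <;> rw [h2] at hr <;> linarith
  by_cases hus : u = s
  · subst hus
    rcases hps with h | h
    · exact hφpne1.1 h
    · exact hφpne1.2 h
  · have hsubus := (hcontact u hu s hsS hus).1
    have hsubRus := htrans u hu s hsS hsubus
    have := aux_endpoint (hφne u hu) (hφne s hsS) hsubRus ⟨hφp u hu hpu, hφp s hsS hpS⟩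
    rcases this with h | h
    · exact hφpne1.1 h
    · exact hφpne1.2 h
end

section
/- Let v be a point in the plane with finitely many neighbors, at least three of which, say x, y, z, are positioned so that every closed half-plane whose boundary passes through v contains at least one of x, y, z. Then the sum of consecutive angles at v, traversing the neighbors in the cyclic order x, then y, then z, then back to x, is at least 2π. -/
open EuclideanGeometry

abbrev E2 := EuclideanSpace ℝ (Fin 2)

/-- The sum of the angles at `v` between consecutive neighbors of the cyclic
sequence `l`. -/
noncomputable def angleSum (v : E2) (l : List E2) : ℝ :=
  ((l.zip (l.rotate 1)).map (fun p => ∠ p.1 v p.2)).sum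

section Aux

open InnerProductGeometry

set_option maxHeartbeats 1000000

lemma angle_toReal_triangle (θ ψ : Real.Angle) :
    |(θ + ψ).toReal| ≤ |θ.toReal| + |ψ.toReal| := by
  rcases le_or_gt Real.pi (|θ.toReal + ψ.toReal|) with h | h
  · calc |(θ + ψ).toReal| ≤ Real.pi := Real.Angle.abs_toReal_le_pi _
    _ ≤ |θ.toReal + ψ.toReal| := h
    _ ≤ |θ.toReal| + |ψ.toReal| := abs_add_le _ _
  · have h1 : θ + ψ = ((θ.toReal + ψ.toReal : ℝ) : Real.Angle) := by
      rw [Real.Angle.coe_add, Real.Angle.coe_toReal, Real.Angle.coe_toReal]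
    rw [h1, Real.Angle.toReal_coe_eq_self_iff.2 ⟨by cases abs_lt.1 h; linarith, (abs_lt.1 h).2.le⟩]
    exact abs_add_le _ _

instance : Fact (Module.finrank ℝ E2 = 2) := ⟨finrank_euclideanSpace_fin⟩

noncomputable def o2 : Orientation ℝ E2 (Fin 2) :=
  (EuclideanSpace.basisFun (Fin 2) ℝ).toBasis.orientation

lemma angle_triangle' {x y z : E2} (hx : x ≠ 0) (hy : y ≠ 0) (hz : z ≠ 0) :
    InnerProductGeometry.angle x z ≤
      InnerProductGeometry.angle x y + InnerProductGeometry.angle y z := by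
  rw [o2.angle_eq_abs_oangle_toReal hx hz, o2.angle_eq_abs_oangle_toReal hx hy,
    o2.angle_eq_abs_oangle_toReal hy hz, ← o2.oangle_add hx hy hz]
  exact angle_toReal_triangle _ _

lemma toReal_pos_of_sign_one {θ : Real.Angle} (h : θ.sign = 1) : 0 < θ.toReal := by
  rcases (Real.Angle.toReal_nonneg_iff_sign_nonneg.2 (by rw [h]; norm_num)).lt_or_eq with h' | h'
  · exact h'
  · exfalso
    rw [Real.Angle.toReal_eq_zero_iff.1 h'.symm] at h
    simp [Real.Angle.sign_zero] at h

lemma angle_between {b c : E2} {s t : ℝ} (hb : b ≠ 0) (hc : c ≠ 0)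
    (hd : s • b + t • c ≠ 0) (hs : 0 < s) (ht : 0 < t) :
    InnerProductGeometry.angle b (s • b + t • c) +
      InnerProductGeometry.angle (s • b + t • c) c ≤ InnerProductGeometry.angle b c := by
  set d := s • b + t • c with hdd
  have h1 : (o2.oangle b d).sign = (o2.oangle b c).sign := by
    rw [hdd, o2.oangle_sign_smul_add_right b (t • c) s, o2.oangle_smul_right_of_pos b c ht]
  have h2 : (o2.oangle d c).sign = (o2.oangle b c).sign := by
    have h2' : (o2.oangle c d).sign = (o2.oangle c b).sign := by
      rw [hdd, add_comm (s • b), o2.oangle_sign_smul_add_right c (s • b) t,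
        o2.oangle_smul_right_of_pos c b hs]
    rw [o2.oangle_rev c d, Real.Angle.sign_neg, h2', o2.oangle_rev b c, Real.Angle.sign_neg,
      neg_neg]
  have hadd : o2.oangle b d + o2.oangle d c = o2.oangle b c := o2.oangle_add hb hd hc
  have hab := o2.angle_eq_abs_oangle_toReal hb hd
  have hdc := o2.angle_eq_abs_oangle_toReal hd hc
  have hbc := o2.angle_eq_abs_oangle_toReal hb hc
  set T := (o2.oangle b c).toReal with hT'
  set t1 := (o2.oangle b d).toReal with ht1'
  set t2 := (o2.oangle d c).toReal with ht2'
  have hk : ∃ k : ℤ, t1 + t2 - T = 2 * Real.pi * k := by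
    rw [← Real.Angle.angle_eq_iff_two_pi_dvd_sub, Real.Angle.coe_add,
      Real.Angle.coe_toReal, Real.Angle.coe_toReal, Real.Angle.coe_toReal, hadd]
  have hpi := Real.pi_pos
  have hub1 : t1 ≤ Real.pi := Real.Angle.toReal_le_pi _
  have hub2 : t2 ≤ Real.pi := Real.Angle.toReal_le_pi _
  have hubT : T ≤ Real.pi := Real.Angle.toReal_le_pi _
  have hlb1 : -Real.pi < t1 := Real.Angle.neg_pi_lt_toReal _
  have hlb2 : -Real.pi < t2 := Real.Angle.neg_pi_lt_toReal _
  have hlbT : -Real.pi < T := Real.Angle.neg_pi_lt_toReal _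
  have htri : ∀ s : SignType, s = -1 ∨ s = 0 ∨ s = 1 := by decide
  rcases htri (o2.oangle b c).sign with hσ | hσ | hσ
  · -- sign -1
    have ht1n : t1 < 0 := Real.Angle.toReal_neg_iff_sign_neg.2 (h1.trans hσ)
    have ht2n : t2 < 0 := Real.Angle.toReal_neg_iff_sign_neg.2 (h2.trans hσ)
    have hTn : T < 0 := Real.Angle.toReal_neg_iff_sign_neg.2 hσ
    obtain ⟨k, hk⟩ := hk
    have hk1 : (k : ℝ) < 1 := by nlinarith
    have hk2 : (-1 : ℝ) < k := by nlinarith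
    have hk0 : k = 0 := by
      have a1 : k < 1 := by exact_mod_cast hk1
      have a2 : -1 < k := by exact_mod_cast hk2
      omega
    rw [hk0] at hk
    rw [hab, hdc, hbc, abs_of_neg ht1n, abs_of_neg ht2n, abs_of_neg hTn]
    push_cast at hk
    linarith
  · -- sign 0 : collinear
    rcases Real.Angle.sign_eq_zero_iff.1 hσ with h0 | hπ
    · have hbc' : SameRay ℝ b c := o2.oangle_eq_zero_iff_sameRay.1 h0
      have hbd : SameRay ℝ b d := by
        rw [hdd]
        exact (SameRay.sameRay_nonneg_smul_right b hs.le).add_right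
          (hbc'.nonneg_smul_right ht.le)
      have hdc' : SameRay ℝ d c := hbd.symm.trans hbc' (fun h => (hb h).elim)
      have e1 : InnerProductGeometry.angle b d = 0 := by
        rw [hab, ht1', o2.oangle_eq_zero_iff_sameRay.2 hbd]; simp
      have e2 : InnerProductGeometry.angle d c = 0 := by
        rw [hdc, ht2', o2.oangle_eq_zero_iff_sameRay.2 hdc']; simp
      rw [e1, e2]
      simpa using InnerProductGeometry.angle_nonneg b c
    · have hbcπ : InnerProductGeometry.angle b c = Real.pi := by
        rw [hbc, hT', hπ, Real.Angle.toReal_pi, abs_of_pos hpi]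
      obtain ⟨_, _, hray⟩ := o2.oangle_eq_pi_iff_sameRay_neg.1 hπ
      obtain ⟨r₁, r₂, hr₁, hr₂, hr⟩ := hray.exists_pos hb (neg_ne_zero.2 hc)
      have hbμ : b = (r₂ / r₁) • (-c) := by
        rw [div_eq_inv_mul, mul_smul, ← hr, smul_smul, inv_mul_cancel₀ hr₁.ne', one_smul]
      have hdρ : d = (t - s * (r₂ / r₁)) • c := by
        rw [hdd, hbμ]
        module
      have hρ : t - s * (r₂ / r₁) ≠ 0 := by
        intro h
        rw [hdρ, h, zero_smul] at hd
        exact hd rfl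
      rcases hρ.lt_or_gt with hρn | hρp
      · have e1 : InnerProductGeometry.angle b d = 0 := by
          rw [hbμ, hdρ, angle_smul_left_of_pos _ _ (div_pos hr₂ hr₁),
            angle_smul_right_of_neg _ _ hρn, angle_neg_neg, angle_self hc]
        have := InnerProductGeometry.angle_le_pi d c
        rw [hbcπ]
        linarith
      · have e2 : InnerProductGeometry.angle d c = 0 := by
          rw [hdρ, angle_smul_left_of_pos _ _ hρp, angle_self hc]
        have := InnerProductGeometry.angle_le_pi b d
        rw [hbcπ]
        linarith
  · -- sign 1
    have ht1p : 0 < t1 := toReal_pos_of_sign_one (h1.trans hσ)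
    have ht2p : 0 < t2 := toReal_pos_of_sign_one (h2.trans hσ)
    have hTp : 0 < T := toReal_pos_of_sign_one hσ
    obtain ⟨k, hk⟩ := hk
    have hk1 : (k : ℝ) < 1 := by nlinarith
    have hk2 : (-1 : ℝ) < k := by nlinarith
    have hk0 : k = 0 := by
      have a1 : k < 1 := by exact_mod_cast hk1
      have a2 : -1 < k := by exact_mod_cast hk2
      omega
    rw [hk0] at hk
    rw [hab, hdc, hbc, abs_of_pos ht1p, abs_of_pos ht2p, abs_of_pos hTp]
    push_cast at hk
    linarith

/-- Main geometric lemma: if `0` is in the convex hull of three nonzero vectors then the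
sum of the pairwise angles is at least `2π`. -/
lemma two_pi_le_angle_sum_of_mem_hull {a b c : E2} (ha : a ≠ 0) (hb : b ≠ 0) (hc : c ≠ 0)
    (h : (0 : E2) ∈ convexHull ℝ ({a, b, c} : Set E2)) :
    2 * Real.pi ≤ InnerProductGeometry.angle a b + InnerProductGeometry.angle b c +
      InnerProductGeometry.angle c a := by
  have hpi := Real.pi_pos
  rw [show ({a, b, c} : Set E2) = insert a {b, c} from rfl,
    convexHull_insert ⟨b, by simp⟩, convexHull_pair] at h
  rw [mem_convexJoin] at h
  obtain ⟨a', ha', d, hd, hseg⟩ := h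
  rw [Set.mem_singleton_iff] at ha'
  rw [ha'] at hseg
  obtain ⟨p, q, hp, hq, hpq, heq⟩ := hseg
  obtain ⟨s, t, hs, ht, hst, hdeq⟩ := hd
  rcases hq.lt_or_eq with hq0 | hq0
  swap
  · exfalso
    rw [← hq0, zero_smul, add_zero] at heq
    have hp1 : p = 1 := by linarith
    rw [hp1, one_smul] at heq
    exact ha heq
  rcases hp.lt_or_eq with hp0 | hp0
  swap
  · -- p = 0 : d = 0, so 0 is in segment b c
    rw [← hp0, zero_smul, zero_add] at heq
    have hpq1 : q = 1 := by linarith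
    rw [hpq1, one_smul] at heq
    rw [heq] at hdeq
    rcases hs.lt_or_eq with hs0 | hs0
    swap
    · exfalso
      rw [← hs0, zero_smul, zero_add] at hdeq
      have : t = 1 := by linarith
      rw [this, one_smul] at hdeq
      exact hc hdeq
    rcases ht.lt_or_eq with ht0 | ht0
    swap
    · exfalso
      rw [← ht0, zero_smul, add_zero] at hdeq
      have hs1 : s = 1 := by linarith
      rw [hs1, one_smul] at hdeq
      exact hb hdeq
    · -- s, t > 0 and s•b + t•c = 0 : b antiparallel to c
      have hbc : b = (-(t / s)) • c := by
        have h1 : s • b = -(t • c) := by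
          have h2 : s • b + t • c - t • c = 0 - t • c := by rw [hdeq]
          simpa using h2
        rw [neg_smul, div_eq_inv_mul, mul_smul, ← smul_neg, ← h1, smul_smul,
          inv_mul_cancel₀ hs0.ne', one_smul]
      have e1 : InnerProductGeometry.angle b c = Real.pi := by
        rw [hbc, angle_smul_left_of_neg _ _ (neg_lt_zero.2 (div_pos ht0 hs0)),
          angle_neg_left, angle_self hc]
        ring
      have htr : InnerProductGeometry.angle b c ≤
          InnerProductGeometry.angle b a + InnerProductGeometry.angle a c :=
        angle_triangle' hb ha hc
      rw [InnerProductGeometry.angle_comm b a] at htr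
      rw [InnerProductGeometry.angle_comm a c] at htr
      linarith [e1]
  · -- p, q > 0
    have hd0 : d = (q⁻¹ * (-p)) • a := by
      rw [mul_smul, neg_smul]
      have h1 : q • d = -(p • a) := by
        have : p • a + q • d - p • a = 0 - p • a := by rw [heq]
        simpa using this
      rw [← h1, smul_smul, inv_mul_cancel₀ hq0.ne', one_smul]
    have hdne : d ≠ 0 := by
      rw [hd0]
      exact smul_ne_zero (by
        intro h
        have : (p : ℝ) = 0 := by
          have := mul_eq_zero.1 h
          rcases this with h' | h'
          · exact absurd h' (inv_ne_zero hq0.ne')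
          · linarith [neg_eq_zero.1 h']
        linarith) ha
    have haa : a = (p⁻¹ * (-q)) • d := by
      rw [mul_smul, neg_smul]
      have h1 : p • a = -(q • d) := by
        have : p • a + q • d - q • d = 0 - q • d := by rw [heq]
        simpa using this
      rw [← h1, smul_smul, inv_mul_cancel₀ hp0.ne', one_smul]
    rcases hs.lt_or_eq with hs0 | hs0
    swap
    · -- s = 0 : d = c
      rw [← hs0, zero_smul, zero_add] at hdeq
      have ht1 : t = 1 := by linarith
      rw [ht1, one_smul] at hdeq
      subst hdeq
      have e1 : InnerProductGeometry.angle c a = Real.pi := by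
        rw [hd0, angle_smul_left_of_neg _ _ (by
            have : (0:ℝ) < q⁻¹ * p := by positivity
            nlinarith), angle_neg_left, angle_self ha]
        ring
      have htr : InnerProductGeometry.angle a c ≤
          InnerProductGeometry.angle a b + InnerProductGeometry.angle b c :=
        angle_triangle' ha hb hc
      rw [InnerProductGeometry.angle_comm a c] at htr
      linarith [e1]
    rcases ht.lt_or_eq with ht0 | ht0
    swap
    · -- t = 0 : d = b
      rw [← ht0, zero_smul, add_zero] at hdeq
      have hs1 : s = 1 := by linarith
      rw [hs1, one_smul] at hdeq
      subst hdeq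
      have e1 : InnerProductGeometry.angle a b = Real.pi := by
        rw [InnerProductGeometry.angle_comm, hd0,
          angle_smul_left_of_neg _ _ (by
            have : (0:ℝ) < q⁻¹ * p := by positivity
            nlinarith), angle_neg_left, angle_self ha]
        ring
      have htr : InnerProductGeometry.angle b a ≤
          InnerProductGeometry.angle b c + InnerProductGeometry.angle c a :=
        angle_triangle' hb hc ha
      rw [InnerProductGeometry.angle_comm b a] at htr
      linarith [e1]
    · -- s, t > 0 : the generic case
      have hbet : InnerProductGeometry.angle b d + InnerProductGeometry.angle d c ≤
          InnerProductGeometry.angle b c := by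
        rw [← hdeq] at hdne ⊢
        exact angle_between hb hc hdne hs0 ht0
      have e1 : InnerProductGeometry.angle a b = Real.pi - InnerProductGeometry.angle d b := by
        rw [haa, angle_smul_left_of_neg _ _ (by
            have : (0:ℝ) < p⁻¹ * q := by positivity
            nlinarith), angle_neg_left]
      have e2 : InnerProductGeometry.angle c a = Real.pi - InnerProductGeometry.angle c d := by
        rw [haa, angle_smul_right_of_neg _ _ (by
            have : (0:ℝ) < p⁻¹ * q := by positivity
            nlinarith), angle_neg_right]
      rw [InnerProductGeometry.angle_comm d b] at e1
      rw [InnerProductGeometry.angle_comm c d] at e2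
      linarith



noncomputable def consecSum (v : E2) : List E2 → ℝ
  | [] => 0
  | [_] => 0
  | a :: b :: t => ∠ a v b + consecSum v (b :: t)

lemma consecSum_zip (v : E2) : ∀ (t : List E2) (a e : E2),
    (((a :: t).zip (t ++ [e])).map (fun p => ∠ p.1 v p.2)).sum = consecSum v (a :: (t ++ [e]))
  | [], a, e => by simp [consecSum]
  | b :: t', a, e => by
    have ih := consecSum_zip v t' b e
    simp only [List.cons_append, List.zip_cons_cons, List.map_cons, List.sum_cons] at ih ⊢
    rw [ih]
    simp [consecSum]

lemma angleSum_cons (v : E2) (a : E2) (t : List E2) :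
    angleSum v (a :: t) = consecSum v (a :: (t ++ [a])) := by
  unfold angleSum
  rw [show (1 : ℕ) = 0 + 1 from rfl, List.rotate_cons_succ, List.rotate_zero]
  exact consecSum_zip v t a a

lemma consecSum_split (v : E2) : ∀ (s : List E2) (a c : E2) (t : List E2),
    consecSum v (a :: (s ++ c :: t)) = consecSum v (a :: (s ++ [c])) + consecSum v (c :: t)
  | [], a, c, t => by
    induction t with
    | nil => simp [consecSum]
    | cons b t' ih => simp [consecSum]
  | b :: s', a, c, t => by
    have ih := consecSum_split v s' b c t
    simp only [List.cons_append, List.append_eq, consecSum] at ih ⊢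
    rw [ih]
    ring

lemma chain_le (v : E2) : ∀ (s : List E2) (a e : E2), a ≠ v → e ≠ v →
    (∀ p ∈ s, p ≠ v) → ∠ a v e ≤ consecSum v (a :: (s ++ [e]))
  | [], a, e, _, _, _ => by simp [consecSum]
  | b :: s', a, e, ha, he, hs => by
    have hb : b ≠ v := hs b (by simp)
    have ih := chain_le v s' b e hb he (fun p hp => hs p (by simp [hp]))
    have htri : ∠ a v e ≤ ∠ a v b + ∠ b v e := by
      have := angle_triangle' (x := a - v) (y := b - v) (z := e - v)
        (sub_ne_zero.2 ha) (sub_ne_zero.2 hb) (sub_ne_zero.2 he)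
      simpa [EuclideanGeometry.angle, vsub_eq_sub] using this
    calc ∠ a v e ≤ ∠ a v b + ∠ b v e := htri
    _ ≤ ∠ a v b + consecSum v (b :: (s' ++ [e])) := by linarith [ih]
    _ = consecSum v (a :: (b :: s' ++ [e])) := by simp [consecSum]

lemma angleSum_rotate_one (v : E2) (l : List E2) :
    angleSum v (l.rotate 1) = angleSum v l := by
  match l with
  | [] => rfl
  | [a] => rw [List.rotate_singleton]
  | a :: b :: t' =>
    rw [show (a :: b :: t').rotate 1 = b :: (t' ++ [a]) by
      rw [show (1 : ℕ) = 0 + 1 from rfl, List.rotate_cons_succ, List.rotate_zero]; simp]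
    rw [angleSum_cons, angleSum_cons]
    rw [show (t' ++ [a]) ++ [b] = t' ++ a :: [b] by simp]
    rw [consecSum_split v t' b a [b]]
    rw [show (b :: t') ++ [a] = b :: (t' ++ [a]) from rfl]
    simp [consecSum]
    ring

lemma angleSum_rotate (v : E2) : ∀ (n : ℕ) (l : List E2),
    angleSum v (l.rotate n) = angleSum v l
  | 0, l => by rw [List.rotate_zero]
  | n + 1, l => by
    rw [← List.rotate_rotate, angleSum_rotate_one]
    exact angleSum_rotate v n l

end Aux

set_option maxHeartbeats 1600000 in
/-- If among the neighbors of `v` (listed in cyclic order in `l`) there are three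
points `x, y, z` such that every closed half-plane whose boundary passes through `v`
contains at least one of them, then the sum of consecutive angles at `v` around the
cyclic order is at least `2π`. -/
theorem angle_sum_ge_two_pi
    (v : E2) (l : List E2)
    (hne : ∀ p ∈ l, p ≠ v)
    (x y z : E2) (hx : x ∈ l) (hy : y ∈ l) (hz : z ∈ l)
    (hxyz : [x, y, z].Pairwise (· ≠ ·))
    (hhalf : ∀ w : E2, w ≠ 0 →
      ∃ p ∈ ({x, y, z} : Set E2), 0 ≤ (inner ℝ w (p - v) : ℝ)) :
    2 * Real.pi ≤ angleSum v l := by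
  have hxv := hne x hx
  have hyv := hne y hy
  have hzv := hne z hz
  have hxy : x ≠ y := by
    have := List.pairwise_cons.1 hxyz
    exact this.1 y (by simp)
  have hxz : x ≠ z := by
    have := List.pairwise_cons.1 hxyz
    exact this.1 z (by simp)
  have hyz : y ≠ z := by
    have h' := List.pairwise_cons.1 (List.pairwise_cons.1 hxyz).2
    exact h'.1 z (by simp)
  -- Step 1: 0 is in the convex hull of the three direction vectors.
  have hhull : (0 : E2) ∈ convexHull ℝ ({x - v, y - v, z - v} : Set E2) := by
    by_contra h0
    obtain ⟨f, u, hfu, hall⟩ := geometric_hahn_banach_point_closed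
      (convex_convexHull ℝ _) ((Set.toFinite _).isClosed_convexHull (𝕜 := ℝ)) h0
    have hu : 0 < u := by simpa using hfu
    set w : E2 := -(InnerProductSpace.toDual ℝ E2).symm f with hw
    have hwf : ∀ p : E2, (inner ℝ w p : ℝ) = -(f p) := by
      intro p
      rw [hw, inner_neg_left, InnerProductSpace.toDual_symm_apply]
    have hwne : w ≠ 0 := by
      intro h'
      have h1 : u < f (x - v) := hall _ (subset_convexHull ℝ _ (by simp))
      have h2 : (inner ℝ w (x - v) : ℝ) = 0 := by rw [h', inner_zero_left]
      rw [hwf] at h2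
      linarith
    obtain ⟨p, hp, hip⟩ := hhalf w hwne
    have hpv : p - v ∈ ({x - v, y - v, z - v} : Set E2) := by
      simp only [Set.mem_insert_iff, Set.mem_singleton_iff] at hp
      rcases hp with h | h | h <;> simp [h]
    have := hall _ (subset_convexHull ℝ _ hpv)
    rw [hwf] at hip
    linarith
  -- Step 2: the three pairwise angles at v sum to at least 2π.
  have hkey : 2 * Real.pi ≤ ∠ x v y + ∠ y v z + ∠ z v x := by
    have := two_pi_le_angle_sum_of_mem_hull (sub_ne_zero.2 hxv) (sub_ne_zero.2 hyv)
      (sub_ne_zero.2 hzv) hhull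
    simpa [EuclideanGeometry.angle, vsub_eq_sub] using this
  have hkey' : 2 * Real.pi ≤ ∠ x v z + ∠ z v y + ∠ y v x := by
    rw [EuclideanGeometry.angle_comm x v z, EuclideanGeometry.angle_comm z v y,
      EuclideanGeometry.angle_comm y v x]
    linarith
  -- Step 3: rotate the list so that x comes first.
  obtain ⟨l₁, l₂, rfl⟩ := List.append_of_mem hx
  have hrot : angleSum v (x :: (l₂ ++ l₁)) = angleSum v (l₁ ++ x :: l₂) := by
    rw [← angleSum_rotate v l₁.length (l₁ ++ x :: l₂)]
    congr 1
    rw [List.rotate_eq_drop_append_take (by simp)]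
    rw [List.drop_left, List.take_left]
    simp
  rw [← hrot]
  have hy' : y ∈ l₂ ++ l₁ := by
    simp only [List.mem_append, List.mem_cons] at hy ⊢
    rcases hy with h | h | h
    · exact Or.inr h
    · exact absurd h.symm hxy
    · exact Or.inl h
  have hz' : z ∈ l₂ ++ l₁ := by
    simp only [List.mem_append, List.mem_cons] at hz ⊢
    rcases hz with h | h | h
    · exact Or.inr h
    · exact absurd h.symm hxz
    · exact Or.inl h
  obtain ⟨u1, w1, ht⟩ := List.append_of_mem hy'
  have hmem : ∀ p ∈ x :: (u1 ++ y :: w1), p ≠ v := by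
    intro p hp
    apply hne
    rw [← ht] at hp
    simp only [List.mem_cons, List.mem_append] at hp ⊢
    tauto
  rw [show l₂ ++ l₁ = u1 ++ y :: w1 from ht]
  have hz'' : z ∈ u1 ∨ z ∈ w1 := by
    rw [ht] at hz'
    simp only [List.mem_append, List.mem_cons] at hz'
    rcases hz' with h | h | h
    · exact Or.inl h
    · exact absurd h hyz.symm
    · exact Or.inr h
  rcases hz'' with hzu | hzw
  · -- z occurs before y : cyclic order x, z, y
    obtain ⟨w2, w3, hw⟩ := List.append_of_mem hzu
    rw [show u1 = w2 ++ z :: w3 from hw]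
    rw [angleSum_cons]
    rw [show ((w2 ++ z :: w3) ++ y :: w1) ++ [x] = w2 ++ z :: (w3 ++ y :: (w1 ++ [x])) by simp]
    rw [consecSum_split v w2 x z (w3 ++ y :: (w1 ++ [x]))]
    rw [consecSum_split v w3 z y (w1 ++ [x])]
    have hm1 : ∀ p ∈ w2, p ≠ v := fun p hp => hmem p (by
      simp only [hw, List.mem_cons, List.mem_append]; tauto)
    have hm2 : ∀ p ∈ w3, p ≠ v := fun p hp => hmem p (by
      simp only [hw, List.mem_cons, List.mem_append]; tauto)
    have hm3 : ∀ p ∈ w1, p ≠ v := fun p hp => hmem p (by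
      simp only [List.mem_cons, List.mem_append]; tauto)
    have c1 := chain_le v w2 x z hxv hzv hm1
    have c2 := chain_le v w3 z y hzv hyv hm2
    have c3 := chain_le v w1 y x hyv hxv hm3
    linarith
  · -- y occurs before z : cyclic order x, y, z
    obtain ⟨w2, w3, hw⟩ := List.append_of_mem hzw
    rw [show w1 = w2 ++ z :: w3 from hw]
    rw [angleSum_cons]
    rw [show (u1 ++ y :: (w2 ++ z :: w3)) ++ [x] = u1 ++ y :: (w2 ++ z :: (w3 ++ [x])) by simp]
    rw [consecSum_split v u1 x y (w2 ++ z :: (w3 ++ [x]))]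
    rw [consecSum_split v w2 y z (w3 ++ [x])]
    have hm1 : ∀ p ∈ u1, p ≠ v := fun p hp => hmem p (by
      simp only [List.mem_cons, List.mem_append]; tauto)
    have hm2 : ∀ p ∈ w2, p ≠ v := fun p hp => hmem p (by
      simp only [hw, List.mem_cons, List.mem_append]; tauto)
    have hm3 : ∀ p ∈ w3, p ≠ v := fun p hp => hmem p (by
      simp only [hw, List.mem_cons, List.mem_append]; tauto)
    have c1 := chain_le v u1 x y hxv hyv hm1
    have c2 := chain_le v w2 y z hyv hzv hm2
    have c3 := chain_le v w3 z x hzv hxv hm3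
    linarith
end
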